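/- Let W be a fully decomposable witness on the n-partite Hilbert space ℂ^{d_1}⊗⋯⊗ℂ^{d_n}, i.e., a Hermitian matrix such that for every nonempty strict subset M of {1,…,n} there exist positive semidefinite matrices P_M and Q_M with W = P_M + Q_M^{T_M}. Then tr(Wρ) ≥ 0 for every PPT mixture ρ. -/

import Mathlib

open Matrix Finset ComplexOrder

/-- The space of linear operators on `ℂ^{d 0} ⊗ ⋯ ⊗ ℂ^{d (n-1)}`, with the tensor
product indexed by tuples `(i 0, …, i (n-1))`. -/
abbrev MatD {n : ℕ} (d : Fin n → ℕ) :=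
  Matrix ((a : Fin n) → Fin (d a)) ((a : Fin n) → Fin (d a)) ℂ

/-- The partial transpose with respect to the subset `M` of tensor factors:
the row and column indices belonging to `M` are swapped. -/
def ptrans {n : ℕ} (d : Fin n → ℕ) (M : Finset (Fin n)) (X : MatD d) : MatD d :=
  fun i j => X (fun a => if a ∈ M then j a else i a) (fun a => if a ∈ M then i a else j a)

/-- A state is a positive semidefinite matrix of trace 1. -/
def IsState {n : ℕ} {d : Fin n → ℕ} (ρ : MatD d) : Prop :=
  ρ.PosSemidef ∧ ρ.trace = 1

/-- The collection of nonempty strict subsets `M ⊊ {1,…,n}`, i.e. the bipartitions `M|M̄`. -/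
def bipartitions (n : ℕ) : Finset (Finset (Fin n)) :=
  Finset.univ.filter (fun M : Finset (Fin n) => M.Nonempty ∧ M ≠ Finset.univ)

/-- A PPT mixture: a convex combination `ρ = Σ_M p_M ρ_M` over the nonempty strict
subsets `M`, where each `ρ_M` is a state whose partial transpose w.r.t. `M` is PSD. -/
def IsPPTMixture {n : ℕ} (d : Fin n → ℕ) (ρ : MatD d) : Prop :=
  ∃ (p : Finset (Fin n) → ℝ) (σ : Finset (Fin n) → MatD d),
    (∀ M, 0 ≤ p M) ∧
    (∑ M ∈ bipartitions n, p M) = 1 ∧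
    (∀ M ∈ bipartitions n, IsState (σ M) ∧ (ptrans d M (σ M)).PosSemidef) ∧
    ρ = ∑ M ∈ bipartitions n, (p M : ℂ) • σ M

section Aux
variable {m : Type*} [Fintype m] [DecidableEq m]

lemma psd_trace_nonneg {A : Matrix m m ℂ} (hA : A.PosSemidef) : 0 ≤ A.trace := by
  rw [Matrix.trace]
  refine Finset.sum_nonneg fun i _ => ?_
  exact hA.diag_nonneg

lemma psd_trace_mul_nonneg {A B : Matrix m m ℂ} (hA : A.PosSemidef)
    (hB : B.PosSemidef) : 0 ≤ (A * B).trace := by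
  obtain ⟨C, rfl⟩ : ∃ C : Matrix m m ℂ, A = Cᴴ * C := by
    open scoped MatrixOrder in exact CStarAlgebra.nonneg_iff_eq_star_mul_self.mp hA.nonneg
  rw [Matrix.mul_assoc, Matrix.trace_mul_comm]
  exact psd_trace_nonneg (hB.mul_mul_conjTranspose_same C)

end Aux

lemma trace_ptrans_mul {n : ℕ} (d : Fin n → ℕ) (M : Finset (Fin n)) (X Y : MatD d) :
    (ptrans d M X * Y).trace = (X * ptrans d M Y).trace := by
  classical
  have hinv : Function.Involutive
      (fun p : (((a : Fin n) → Fin (d a)) × ((a : Fin n) → Fin (d a))) =>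
        ((fun a => if a ∈ M then p.2 a else p.1 a),
         (fun a => if a ∈ M then p.1 a else p.2 a))) := by
    intro p
    refine Prod.ext ?_ ?_ <;> funext a <;> by_cases h : a ∈ M <;> simp [h]
  let e := hinv.toPerm
  have key : ∀ p : (((a : Fin n) → Fin (d a)) × ((a : Fin n) → Fin (d a))),
      ptrans d M X p.1 p.2 * Y p.2 p.1
        = X (e p).1 (e p).2 * ptrans d M Y (e p).2 (e p).1 := by
    intro p
    simp only [e, Function.Involutive.toPerm, Equiv.coe_fn_mk, ptrans]
    refine congrArg₂ (· * ·) rfl ?_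
    refine congrArg₂ Y ?_ ?_ <;> funext a <;> by_cases h : a ∈ M <;> simp [h]
  calc (ptrans d M X * Y).trace
      = ∑ p : (((a : Fin n) → Fin (d a)) × ((a : Fin n) → Fin (d a))),
          ptrans d M X p.1 p.2 * Y p.2 p.1 := by
        simp [Matrix.trace, Matrix.diag, Matrix.mul_apply, Fintype.sum_prod_type]
    _ = ∑ p : (((a : Fin n) → Fin (d a)) × ((a : Fin n) → Fin (d a))),
          X p.1 p.2 * ptrans d M Y p.2 p.1 := by
        exact Fintype.sum_equiv e _ _ key
    _ = (X * ptrans d M Y).trace := by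
        simp [Matrix.trace, Matrix.diag, Matrix.mul_apply, Fintype.sum_prod_type]

/-- a fully decomposable witness has nonnegative expectation value on
every PPT mixture. -/
theorem fully_decomposable_nonneg_on_PPT_mixtures
    {n : ℕ} (d : Fin n → ℕ) (W : MatD d) (hW : W.IsHermitian)
    (hdec : ∀ M : Finset (Fin n), M.Nonempty → M ≠ Finset.univ →
      ∃ P Q : MatD d, P.PosSemidef ∧ Q.PosSemidef ∧ W = P + ptrans d M Q)
    (ρ : MatD d) (hρ : IsPPTMixture d ρ) :
    0 ≤ (W * ρ).trace := by
  obtain ⟨p, σ, hp, hsum, hσ, rfl⟩ := hρ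
  rw [Finset.mul_sum, Matrix.trace_sum]
  refine Finset.sum_nonneg fun M hM => ?_
  obtain ⟨⟨hσpsd, -⟩, hpt⟩ := hσ M hM
  obtain ⟨hMne, hMuniv⟩ : M.Nonempty ∧ M ≠ Finset.univ := by
    simpa [bipartitions] using hM
  obtain ⟨P, Q, hP, hQ, hWeq⟩ := hdec M hMne hMuniv
  rw [Matrix.mul_smul, Matrix.trace_smul]
  have h0 : (0:ℂ) ≤ (W * σ M).trace := by
    rw [hWeq, Matrix.add_mul, Matrix.trace_add]
    refine add_nonneg (psd_trace_mul_nonneg hP hσpsd) ?_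
    rw [trace_ptrans_mul]
    exact psd_trace_mul_nonneg hQ hpt
  have hpM : (0:ℂ) ≤ (p M : ℂ) := by exact_mod_cast hp M
  simpa [smul_eq_mul] using mul_nonneg hpM h0
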